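/- Let R be a commutative ring of characteristic 2, n ≥ 2, 1 ≤ i ≤ n−1, b ∈ R, and let U ∈ Mat_n(R) be strictly upper triangular. Set b' = b + U_{i,i+1}. Then Z_i(b')⁻¹·(I + U)·Z_i(b) is upper unitriangular, i.e., all of its entries strictly below the diagonal vanish and all of its diagonal entries equal 1. -/

import Mathlib

open Matrix

def Zmat {R : Type*} [CommRing R] (n i : ℕ) (b : R) : Matrix (Fin n) (Fin n) R :=
  Matrix.of fun a c =>
    if (a : ℕ) + 1 = i ∧ (c : ℕ) + 1 = i then b
    else if (a : ℕ) + 1 = i ∧ (c : ℕ) = i then 1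
    else if (a : ℕ) = i ∧ (c : ℕ) + 1 = i then 1
    else if (a : ℕ) = i ∧ (c : ℕ) = i then 0
    else if a = c then 1 else 0

section aux

variable {R : Type*} [CommRing R] {n i : ℕ}

private lemma Zmat_eq (hi1 : 1 ≤ i) (b : R) (j k : Fin n) (hj : (j : ℕ) = i - 1)
    (hk : (k : ℕ) = i) :
    Zmat n i b = 1 + single j j (b - 1) + single j k 1
      + single k j 1 + single k k (-1) := by
  ext a c
  simp only [Zmat, Matrix.of_apply, Matrix.add_apply, Matrix.one_apply, Matrix.single,
    Fin.ext_iff, hj, hk]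
  split_ifs <;> first | ring1 | (exfalso; omega)

variable {j k : Fin n} {α β γ δ : R} {P : Matrix (Fin n) (Fin n) R}

private lemma genL_j (hjk : j ≠ k) (c : Fin n) :
    ((1 + single j j α + single j k β + single k j γ
      + single k k δ) * P) j c = (1 + α) * P j c + β * P k c := by
  simp [Matrix.add_mul, Matrix.add_apply, hjk]
  ring1

private lemma genL_k (hjk : j ≠ k) (c : Fin n) :
    ((1 + single j j α + single j k β + single k j γ
      + single k k δ) * P) k c = γ * P j c + (1 + δ) * P k c := by
  simp [Matrix.add_mul, Matrix.add_apply, hjk.symm]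
  ring1

private lemma genL_other {a : Fin n} (haj : a ≠ j) (hak : a ≠ k) (c : Fin n) :
    ((1 + single j j α + single j k β + single k j γ
      + single k k δ) * P) a c = P a c := by
  simp [Matrix.add_mul, Matrix.add_apply, haj, hak]

private lemma genR_j (hjk : j ≠ k) (a : Fin n) :
    (P * (1 + single j j α + single j k β + single k j γ
      + single k k δ)) a j = (1 + α) * P a j + γ * P a k := by
  simp [Matrix.mul_add, Matrix.add_apply, hjk]
  ring1

private lemma genR_k (hjk : j ≠ k) (a : Fin n) :
    (P * (1 + single j j α + single j k β + single k j γ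
      + single k k δ)) a k = β * P a j + (1 + δ) * P a k := by
  simp [Matrix.mul_add, Matrix.add_apply, hjk.symm]
  ring1

private lemma genR_other (a : Fin n) {c : Fin n} (hcj : c ≠ j) (hck : c ≠ k) :
    (P * (1 + single j j α + single j k β + single k j γ
      + single k k δ)) a c = P a c := by
  simp [Matrix.mul_add, Matrix.add_apply, hcj, hck]

end aux

section main

variable {R : Type*} [CommRing R] [CharP R 2] {n i : ℕ}

private lemma master (hn : 2 ≤ n) (hi1 : 1 ≤ i) (hi2 : i ≤ n - 1) (b : R)
    (U : Matrix (Fin n) (Fin n) R) (hU : ∀ a c : Fin n, c ≤ a → U a c = 0)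
    (j k : Fin n) (hj : (j : ℕ) = i - 1) (hk : (k : ℕ) = i) :
    (∀ a c : Fin n, c < a → ((Zmat n i (b + U j k))⁻¹ * (1 + U) * Zmat n i b) a c = 0) ∧
    (∀ a : Fin n, ((Zmat n i (b + U j k))⁻¹ * (1 + U) * Zmat n i b) a a = 1) := by
  have hjk : j ≠ k := by simp [Fin.ext_iff, hj, hk]; omega
  set b' : R := b + U j k with hb'
  set W : Matrix (Fin n) (Fin n) R :=
    1 + single j j (-1) + single j k 1 + single k j 1
      + single k k (b' - 1) with hWdef
  -- entries of W
  have hWjj : W j j = 0 := by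
    simp [hWdef, Matrix.add_apply, Matrix.one_apply, Matrix.single_apply_of_ne,
      hjk, hjk.symm]
  have hWjk : W j k = 1 := by
    simp [hWdef, Matrix.add_apply, Matrix.one_apply, hjk, hjk.symm]
  have hWkj : W k j = 1 := by
    simp [hWdef, Matrix.add_apply, Matrix.one_apply, hjk, hjk.symm]
  have hWkk : W k k = b' := by
    simp [hWdef, Matrix.add_apply, Matrix.one_apply, hjk, hjk.symm]
  have hWj : ∀ c : Fin n, c ≠ j → c ≠ k → W j c = 0 := by
    intro c h1 h2
    simp [hWdef, Matrix.add_apply, Matrix.one_apply, hjk, h1.symm, h2.symm]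
  have hWk : ∀ c : Fin n, c ≠ j → c ≠ k → W k c = 0 := by
    intro c h1 h2
    simp [hWdef, Matrix.add_apply, Matrix.one_apply, hjk.symm, h1.symm, h2.symm]
  have hWo : ∀ a c : Fin n, a ≠ j → a ≠ k → W a c = if a = c then 1 else 0 := by
    intro a c h1 h2
    simp [hWdef, Matrix.add_apply, Matrix.one_apply, h1.symm, h2.symm]
  -- Z(b') * W = 1
  have hZW : Zmat n i b' * W = 1 := by
    ext a c
    rw [Zmat_eq hi1 b' j k hj hk]
    rcases eq_or_ne a j with haj | haj
    · rw [haj, genL_j hjk]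
      rcases eq_or_ne c j with hcj | hcj
      · rw [hcj, hWjj, hWkj, Matrix.one_apply_eq]; ring
      · rcases eq_or_ne c k with hck | hck
        · rw [hck, hWjk, hWkk, Matrix.one_apply_ne hjk]
          have h1 : (1 : R) + (b' - 1) = b' := by ring
          rw [h1, mul_one, one_mul, CharTwo.add_self_eq_zero]
        · rw [hWj c hcj hck, hWk c hcj hck, Matrix.one_apply_ne (Ne.symm hcj)]; ring
    · rcases eq_or_ne a k with hak | hak
      · rw [hak, genL_k hjk]
        rcases eq_or_ne c j with hcj | hcj
        · rw [hcj, hWjj, hWkj, Matrix.one_apply_ne hjk.symm]; ring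
        · rcases eq_or_ne c k with hck | hck
          · rw [hck, hWjk, hWkk, Matrix.one_apply_eq]; ring
          · rw [hWj c hcj hck, hWk c hcj hck, Matrix.one_apply_ne (Ne.symm hck)]; ring
      · rw [genL_other haj hak, hWo a c haj hak, Matrix.one_apply]
  have hWinv : (Zmat n i b')⁻¹ = W := Matrix.inv_eq_right_inv hZW
  -- entries of P := W * (1 + U)
  set M : Matrix (Fin n) (Fin n) R := 1 + U with hMdef
  have hM : ∀ a c : Fin n, M a c = (if a = c then 1 else 0) + U a c := by
    intro a c; simp [hMdef, Matrix.add_apply, Matrix.one_apply]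
  set P : Matrix (Fin n) (Fin n) R := W * M with hPdef
  have hPj : ∀ c : Fin n, P j c = M k c := by
    intro c; rw [hPdef, hWdef, genL_j hjk]; ring
  have hPk : ∀ c : Fin n, P k c = M j c + b' * M k c := by
    intro c; rw [hPdef, hWdef, genL_k hjk]; ring
  have hPo : ∀ a c : Fin n, a ≠ j → a ≠ k → P a c = M a c := by
    intro a c h1 h2; rw [hPdef, hWdef, genL_other h1 h2]
  have hjlt : (j : ℕ) + 1 = (k : ℕ) := by omega
  have key : (Zmat n i b')⁻¹ * (1 + U) * Zmat n i b = P * Zmat n i b := by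
    rw [hWinv, hPdef, hMdef]
  constructor
  · intro a c hca
    have hca' : (c : ℕ) < (a : ℕ) := hca
    rw [key, Zmat_eq hi1 b j k hj hk]
    rcases eq_or_ne c j with hcj | hcj
    · -- column j
      have hcj' : (c : ℕ) = (j : ℕ) := by rw [hcj]
      rw [hcj, genR_j hjk]
      rcases eq_or_ne a k with hak | hak
      · rw [hak, hPk, hPk, hM, hM, hM, hM]
        rw [if_pos rfl, if_pos rfl, if_neg hjk, if_neg hjk.symm]
        rw [hU j j le_rfl, hU k j (le_of_lt ((Fin.lt_iff_val_lt_val).2 (by omega))),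
          hU k k le_rfl]
        linear_combination CharTwo.add_self_eq_zero b' - hb'
      · have haj : a ≠ j := by
          intro h; rw [h] at hca'; omega
        have hka : (k : ℕ) < (a : ℕ) := by
          have : (j : ℕ) < (a : ℕ) := by omega
          rcases Nat.lt_or_ge (k : ℕ) (a : ℕ) with h | h
          · exact h
          · exfalso; apply hak; apply Fin.ext; omega
        rw [hPo a j haj hak, hPo a k haj hak, hM, hM]
        rw [if_neg (by intro h; apply haj; exact h), if_neg (by intro h; apply hak; exact h)]
        rw [hU a j (le_of_lt ((Fin.lt_iff_val_lt_val).2 (by omega))),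
          hU a k (le_of_lt ((Fin.lt_iff_val_lt_val).2 hka))]
        ring
    · rcases eq_or_ne c k with hck | hck
      · -- column k
        have hck' : (c : ℕ) = (k : ℕ) := by rw [hck]
        have haj : a ≠ j := fun h => by rw [h] at hca'; omega
        have hak : a ≠ k := fun h => by rw [h] at hca'; omega
        rw [hck, genR_k hjk, hPo a j haj hak, hPo a k haj hak, hM, hM]
        rw [if_neg (fun h => haj h), if_neg (fun h => hak h)]
        rw [hU a j (le_of_lt ((Fin.lt_iff_val_lt_val).2 (by omega))),
          hU a k (le_of_lt ((Fin.lt_iff_val_lt_val).2 (by omega)))]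
        ring
      · -- other column
        rw [genR_other a hcj hck]
        rcases eq_or_ne a j with haj | haj
        · have hcj' : (c : ℕ) < (j : ℕ) := by
            rw [haj] at hca'; omega
          rw [haj, hPj, hM, if_neg (fun h => hck h.symm),
            hU k c (le_of_lt ((Fin.lt_iff_val_lt_val).2 (by omega)))]
          ring
        · rcases eq_or_ne a k with hak | hak
          · have hcj' : (c : ℕ) < (j : ℕ) := by
              have := hca'; rw [hak] at this
              rcases Nat.lt_or_ge (c : ℕ) (j : ℕ) with h | h
              · exact h
              · exfalso; apply hcj; apply Fin.ext; omega
            rw [hak, hPk, hM, hM, if_neg (fun h => hcj h.symm), if_neg (fun h => hck h.symm)]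
            rw [hU j c (le_of_lt ((Fin.lt_iff_val_lt_val).2 (by omega))),
              hU k c (le_of_lt ((Fin.lt_iff_val_lt_val).2 (by omega)))]
            ring
          · rw [hPo a c haj hak, hM,
              if_neg (by rintro rfl; exact absurd hca (lt_irrefl _)), hU a c (le_of_lt hca)]
            ring
  · intro a
    rw [key, Zmat_eq hi1 b j k hj hk]
    rcases eq_or_ne a j with haj | haj
    · rw [haj, genR_j hjk, hPj, hPj, hM, hM]
      rw [if_neg hjk.symm, if_pos rfl, hU k j (le_of_lt ((Fin.lt_iff_val_lt_val).2 (by omega))),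
        hU k k le_rfl]
      ring
    · rcases eq_or_ne a k with hak | hak
      · rw [hak, genR_k hjk, hPk, hPk, hM, hM, hM, hM]
        rw [if_pos rfl, if_neg hjk, if_neg hjk.symm, if_pos rfl]
        rw [hU j j le_rfl, hU k j (le_of_lt ((Fin.lt_iff_val_lt_val).2 (by omega))),
          hU k k le_rfl]
        ring
      · rw [genR_other a haj hak, hPo a a haj hak, hM, if_pos rfl, hU a a le_rfl]
        ring
end main


/-- If `U` is strictly upper triangular and `b' = b + U_{i,i+1}` (1-based indices),
then `Z_i(b')⁻¹ (I + U) Z_i(b)` is upper unitriangular. -/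
theorem Zmat_conj_upper_unitriangular {R : Type*} [CommRing R] [CharP R 2] {n : ℕ}
    (hn : 2 ≤ n) (i : ℕ) (hi1 : 1 ≤ i) (hi2 : i ≤ n - 1) (b : R)
    (U : Matrix (Fin n) (Fin n) R) (hU : ∀ a c : Fin n, c ≤ a → U a c = 0) :
    (∀ a c : Fin n, c < a →
        ((Zmat n i (b + U ⟨i - 1, by omega⟩ ⟨i, by omega⟩))⁻¹
          * (1 + U) * Zmat n i b) a c = 0) ∧
    (∀ a : Fin n,
        ((Zmat n i (b + U ⟨i - 1, by omega⟩ ⟨i, by omega⟩))⁻¹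
          * (1 + U) * Zmat n i b) a a = 1) := by
  exact master hn hi1 hi2 b U hU ⟨i - 1, by omega⟩ ⟨i, by omega⟩ rfl rfl
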